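/- Let f be a rational map of degree d > 1 on ℙ¹(ℂ) with lift F to ℂ², and for n ∈ ℕ set T_{Fⁿ}(p) = log‖Fⁿ(p)‖ - dⁿ·log‖p‖ on ℂ²\{0}. Then T_{Fⁿ} is invariant under scalar multiplication (descends to ℙ¹), and the sequence gₙ := T_{Fⁿ}/dⁿ converges uniformly on ℂ²\{0} to a limit g_F (the dynamical Green function). -/

import Mathlib

open Filter

/-- The Euclidean norm on `ℂ²`. -/
noncomputable def enorm2 (p : Fin 2 → ℂ) : ℝ :=
  Real.sqrt (‖p 0‖ ^ 2 + ‖p 1‖ ^ 2)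

/-- The self-map of `ℂ²` determined by a pair of binary forms `(F₀, F₁)`. -/
noncomputable def liftMap (F₀ F₁ : MvPolynomial (Fin 2) ℂ) (p : Fin 2 → ℂ) :
    Fin 2 → ℂ :=
  ![MvPolynomial.eval p F₀, MvPolynomial.eval p F₁]

lemma enorm2_nonneg (p : Fin 2 → ℂ) : 0 ≤ enorm2 p := Real.sqrt_nonneg _

lemma enorm2_pos {p : Fin 2 → ℂ} (hp : p ≠ 0) : 0 < enorm2 p := by
  apply Real.sqrt_pos.mpr
  rcases Classical.em (p 0 = 0) with h0 | h0
  · have h1 : p 1 ≠ 0 := by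
      intro h1; apply hp; funext i; fin_cases i <;> simpa
    have : 0 < ‖p 1‖ ^ 2 := pow_pos (norm_pos_iff.mpr h1) 2
    nlinarith [sq_nonneg (‖p 0‖)]
  · have : 0 < ‖p 0‖ ^ 2 := pow_pos (norm_pos_iff.mpr h0) 2
    nlinarith [sq_nonneg (‖p 1‖)]

lemma enorm2_smul (c : ℂ) (p : Fin 2 → ℂ) :
    enorm2 (c • p) = ‖c‖ * enorm2 p := by
  unfold enorm2
  simp only [Pi.smul_apply, smul_eq_mul, norm_mul, mul_pow]
  rw [← mul_add, Real.sqrt_mul (by positivity), Real.sqrt_sq (by positivity)]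

lemma enorm2_continuous : Continuous enorm2 := by
  unfold enorm2
  exact Real.continuous_sqrt.comp
    (((continuous_norm.comp (continuous_apply 0)).pow 2).add
      ((continuous_norm.comp (continuous_apply 1)).pow 2))

lemma eval_smul_homog {d : ℕ} {φ : MvPolynomial (Fin 2) ℂ} (h : φ.IsHomogeneous d)
    (c : ℂ) (p : Fin 2 → ℂ) :
    MvPolynomial.eval (c • p) φ = c ^ d * MvPolynomial.eval p φ := by
  rw [MvPolynomial.eval_eq', MvPolynomial.eval_eq', Finset.mul_sum]
  apply Finset.sum_congr rfl
  intro m hm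
  have hdeg : ∑ i, m i = d := by
    have := h (MvPolynomial.mem_support_iff.mp hm)
    rw [← this, Finsupp.weight_apply, Finsupp.sum_fintype]
    · simp
    · simp
  have : ∏ i, (c • p) i ^ m i = c ^ d * ∏ i, p i ^ m i := by
    simp only [Pi.smul_apply, smul_eq_mul, mul_pow, Finset.prod_mul_distrib,
      Finset.prod_pow_eq_pow_sum, hdeg]
  rw [this]; ring

lemma liftMap_smul {d : ℕ} {F₀ F₁ : MvPolynomial (Fin 2) ℂ}
    (h₀ : F₀.IsHomogeneous d) (h₁ : F₁.IsHomogeneous d) (c : ℂ) (p : Fin 2 → ℂ) :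
    liftMap F₀ F₁ (c • p) = c ^ d • liftMap F₀ F₁ p := by
  funext i
  fin_cases i <;>
    simp [liftMap, eval_smul_homog h₀, eval_smul_homog h₁]

lemma liftMap_continuous (F₀ F₁ : MvPolynomial (Fin 2) ℂ) :
    Continuous (liftMap F₀ F₁) := by
  unfold liftMap
  refine continuous_pi fun i => ?_
  fin_cases i <;> simp <;> exact MvPolynomial.continuous_eval _

lemma iterate_ne_zero {F₀ F₁ : MvPolynomial (Fin 2) ℂ}
    (hnz : ∀ p : Fin 2 → ℂ, p ≠ 0 → liftMap F₀ F₁ p ≠ 0)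
    (n : ℕ) {p : Fin 2 → ℂ} (hp : p ≠ 0) : (liftMap F₀ F₁)^[n] p ≠ 0 := by
  induction n with
  | zero => simpa
  | succ n ih =>
    rw [Function.iterate_succ_apply']
    exact hnz _ ih

lemma iterate_smul {d : ℕ} {F₀ F₁ : MvPolynomial (Fin 2) ℂ}
    (h₀ : F₀.IsHomogeneous d) (h₁ : F₁.IsHomogeneous d) (n : ℕ) (c : ℂ) (p : Fin 2 → ℂ) :
    (liftMap F₀ F₁)^[n] (c • p) = c ^ d ^ n • (liftMap F₀ F₁)^[n] p := by
  induction n with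
  | zero => simp
  | succ n ih =>
    rw [Function.iterate_succ_apply', ih, Function.iterate_succ_apply',
      liftMap_smul h₀ h₁, ← pow_mul, ← pow_succ]

/-- The key uniform estimate `|log‖F q‖ - d·log‖q‖| ≤ C` on `ℂ² \ {0}`. -/
lemma key_bound {d : ℕ} {F₀ F₁ : MvPolynomial (Fin 2) ℂ}
    (h₀ : F₀.IsHomogeneous d) (h₁ : F₁.IsHomogeneous d)
    (hnz : ∀ p : Fin 2 → ℂ, p ≠ 0 → liftMap F₀ F₁ p ≠ 0) :
    ∃ C : ℝ, ∀ q : Fin 2 → ℂ, q ≠ 0 →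
      |Real.log (enorm2 (liftMap F₀ F₁ q)) - (d : ℝ) * Real.log (enorm2 q)| ≤ C := by
  set S : Set (Fin 2 → ℂ) := enorm2 ⁻¹' {1} with hS
  have hSne : ∀ q ∈ S, q ≠ 0 := by
    intro q hq h0
    rw [h0] at hq
    simp only [S, Set.mem_preimage, Set.mem_singleton_iff] at hq
    norm_num [enorm2] at hq
  have hScompact : IsCompact S := by
    apply Metric.isCompact_of_isClosed_isBounded
    · exact isClosed_singleton.preimage enorm2_continuous
    · rw [Metric.isBounded_iff_subset_closedBall 0]
      refine ⟨1, fun q hq => ?_⟩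
      simp only [S, Set.mem_preimage, Set.mem_singleton_iff] at hq
      have hsum : ‖q 0‖ ^ 2 + ‖q 1‖ ^ 2 = 1 := by
        have := congrArg (fun x => x ^ 2) hq
        simpa [enorm2, Real.sq_sqrt (by positivity :
          (0:ℝ) ≤ ‖q 0‖ ^ 2 + ‖q 1‖ ^ 2)] using this
      rw [Metric.mem_closedBall, dist_zero_right]
      rw [pi_norm_le_iff_of_nonneg (by norm_num)]
      intro i
      have h2 : ‖q i‖ ^ 2 ≤ 1 := by
        fin_cases i
        · show ‖q 0‖ ^ 2 ≤ 1
          nlinarith [sq_nonneg (‖q 1‖)]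
        · show ‖q 1‖ ^ 2 ≤ 1
          nlinarith [sq_nonneg (‖q 0‖)]
      have := norm_nonneg (q i)
      nlinarith
  have hcont : ContinuousOn (fun q => Real.log (enorm2 (liftMap F₀ F₁ q))) S := by
    apply Real.continuousOn_log.comp
      (enorm2_continuous.comp (liftMap_continuous F₀ F₁)).continuousOn
    intro q hq
    exact (enorm2_pos (hnz q (hSne q hq))).ne'
  obtain ⟨C, hC⟩ := hScompact.exists_bound_of_continuousOn hcont
  refine ⟨C, fun q hq => ?_⟩
  set r : ℝ := enorm2 q with hr
  have hrpos : 0 < r := enorm2_pos hq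
  set q' : Fin 2 → ℂ := ((r : ℂ))⁻¹ • q with hq'
  have habs : ‖((r : ℂ))⁻¹‖ = r⁻¹ := by
    rw [norm_inv, Complex.norm_real, Real.norm_eq_abs, abs_of_pos hrpos]
  have hq'S : q' ∈ S := by
    simp only [S, Set.mem_preimage, Set.mem_singleton_iff, hq', enorm2_smul, habs]
    field_simp
    exact hr.symm
  have hq'ne : q' ≠ 0 := hSne q' hq'S
  have hqeq : q = (r : ℂ) • q' := by
    rw [hq', smul_smul, mul_inv_cancel₀ (by exact_mod_cast hrpos.ne'), one_smul]
  have hFq : enorm2 (liftMap F₀ F₁ q) = r ^ d * enorm2 (liftMap F₀ F₁ q') := by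
    rw [hqeq, liftMap_smul h₀ h₁, enorm2_smul, norm_pow, Complex.norm_real, Real.norm_eq_abs,
      abs_of_pos hrpos]
  have hE : 0 < enorm2 (liftMap F₀ F₁ q') := enorm2_pos (hnz q' hq'ne)
  have hlog : Real.log (enorm2 (liftMap F₀ F₁ q)) =
      (d : ℝ) * Real.log r + Real.log (enorm2 (liftMap F₀ F₁ q')) := by
    rw [hFq, Real.log_mul (by positivity) hE.ne', Real.log_pow]
  have := hC q' hq'S
  rw [Real.norm_eq_abs] at this
  calc |Real.log (enorm2 (liftMap F₀ F₁ q)) - (d : ℝ) * Real.log (enorm2 q)|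
      = |Real.log (enorm2 (liftMap F₀ F₁ q'))| := by rw [hlog, ← hr]; ring_nf
    _ ≤ C := this

/-- For a lift `F` of a rational map of degree `d > 1`, `T_{Fⁿ} = log‖Fⁿ‖ - dⁿ log‖·‖` is
invariant under scalar multiplication (hence descends to `ℙ¹(ℂ)`), and `T_{Fⁿ}/dⁿ`
converges uniformly on `ℂ² \ {0}` to the dynamical Green function `g_F`. -/
theorem stmt_11 (d : ℕ) (hd : 1 < d) (F₀ F₁ : MvPolynomial (Fin 2) ℂ)
    (h₀ : F₀.IsHomogeneous d) (h₁ : F₁.IsHomogeneous d)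
    (hnz : ∀ p : Fin 2 → ℂ, p ≠ 0 → liftMap F₀ F₁ p ≠ 0) :
    (∀ (n : ℕ) (c : ℂ) (p : Fin 2 → ℂ), c ≠ 0 → p ≠ 0 →
        Real.log (enorm2 ((liftMap F₀ F₁)^[n] (c • p))) -
            (d : ℝ) ^ n * Real.log (enorm2 (c • p)) =
          Real.log (enorm2 ((liftMap F₀ F₁)^[n] p)) -
            (d : ℝ) ^ n * Real.log (enorm2 p)) ∧
      ∃ gF : (Fin 2 → ℂ) → ℝ,
        TendstoUniformlyOn
          (fun (n : ℕ) (p : Fin 2 → ℂ) =>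
            (Real.log (enorm2 ((liftMap F₀ F₁)^[n] p)) -
                (d : ℝ) ^ n * Real.log (enorm2 p)) / (d : ℝ) ^ n)
          gF atTop {p : Fin 2 → ℂ | p ≠ 0} := by
  have hd0 : (0 : ℝ) < (d : ℝ) := by positivity
  have hd1 : (1 : ℝ) < (d : ℝ) := by exact_mod_cast hd
  set F := liftMap F₀ F₁ with hF
  constructor
  · -- invariance under scalar multiplication
    intro n c p hc hp
    have hiter : F^[n] (c • p) = c ^ d ^ n • F^[n] p := iterate_smul h₀ h₁ n c p
    have hFnp : F^[n] p ≠ 0 := iterate_ne_zero hnz n hp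
    have habsc : ‖c‖ ≠ 0 := norm_ne_zero_iff.mpr hc
    have h1 : Real.log (enorm2 (F^[n] (c • p))) =
        (d : ℝ) ^ n * Real.log (‖c‖) + Real.log (enorm2 (F^[n] p)) := by
      rw [hiter, enorm2_smul, norm_pow,
        Real.log_mul (pow_ne_zero _ habsc) (enorm2_pos hFnp).ne', Real.log_pow]
      push_cast
      ring
    have h2 : Real.log (enorm2 (c • p)) =
        Real.log (‖c‖) + Real.log (enorm2 p) := by
      rw [enorm2_smul, Real.log_mul habsc (enorm2_pos hp).ne']
    rw [h1, h2]
    ring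
  · -- uniform convergence
    obtain ⟨C, hC⟩ := key_bound h₀ h₁ hnz
    set s : Set (Fin 2 → ℂ) := {p | p ≠ 0} with hs
    set g : ℕ → (Fin 2 → ℂ) → ℝ := fun n p =>
      (Real.log (enorm2 (F^[n] p)) - (d : ℝ) ^ n * Real.log (enorm2 p)) / (d : ℝ) ^ n
      with hg
    set u : ℕ → (Fin 2 → ℂ) → ℝ := fun k p => g (k + 1) p - g k p with hu
    have hubound : ∀ k p, p ∈ s → ‖u k p‖ ≤ C / (d : ℝ) ^ (k + 1) := by
      intro k p hp
      have hp' : p ≠ 0 := hp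
      have hq : F^[k] p ≠ 0 := iterate_ne_zero hnz k hp'
      have hkey := hC (F^[k] p) hq
      have hiter : F^[k + 1] p = F (F^[k] p) := Function.iterate_succ_apply' F k p
      have hDk : ((d : ℝ) ^ k) ≠ 0 := by positivity
      have hDk1 : ((d : ℝ) ^ (k + 1)) ≠ 0 := by positivity
      have huk : u k p = (Real.log (enorm2 (F (F^[k] p))) -
          (d : ℝ) * Real.log (enorm2 (F^[k] p))) / (d : ℝ) ^ (k + 1) := by
        simp only [hu, hg, hiter]
        field_simp
        ring
      rw [huk, Real.norm_eq_abs, abs_div, abs_of_pos (by positivity : (0:ℝ) < (d:ℝ) ^ (k+1))]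
      exact div_le_div_of_nonneg_right hkey (by positivity) |>.trans_eq rfl
    have hsummable : Summable fun k => C / (d : ℝ) ^ (k + 1) := by
      have : (fun k => C / (d : ℝ) ^ (k + 1)) = fun k => (C / d) * ((d : ℝ)⁻¹) ^ k := by
        funext k
        rw [pow_succ', ← div_div, div_eq_mul_inv (C / (d : ℝ)), inv_pow]
      rw [this]
      exact (summable_geometric_of_lt_one (by positivity)
        (inv_lt_one_of_one_lt₀ hd1)).mul_left _
    have htsum : TendstoUniformlyOn
        (fun N p => ∑ k ∈ Finset.range N, u k p) (fun p => ∑' k, u k p) atTop s :=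
      tendstoUniformlyOn_tsum_nat hsummable hubound
    have hconst : TendstoUniformlyOn (fun (_ : ℕ) p => g 0 p) (g 0) atTop s :=
      fun v hv => Eventually.of_forall fun _ p _ => refl_mem_uniformity hv
    refine ⟨fun p => g 0 p + ∑' k, u k p, ?_⟩
    have hadd := hconst.add htsum
    apply hadd.congr
    filter_upwards with n p hp
    show g 0 p + ∑ k ∈ Finset.range n, u k p = g n p
    have : ∑ k ∈ Finset.range n, u k p = g n p - g 0 p :=
      Finset.sum_range_sub (fun k => g k p) n
    rw [this]
    ring
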